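/- Let A be a Noetherian local ring with maximal ideal m, and let M be an A-submodule of a direct sum of finitely generated A-modules. If M/mM = 0, then M = 0. -/

import Mathlib

open DirectSum

/-- Let `A` be a Noetherian local ring with maximal ideal `m`, and let `M` be
an `A`-submodule of a direct sum of finitely generated `A`-modules.  If `M/mM = 0`
(equivalently `m • M = M`), then `M = 0`. -/
theorem eq_bot_of_smul_eq_self_of_submodule_of_directSum
    (A : Type*) [CommRing A] [IsNoetherianRing A] [IsLocalRing A]
    (ι : Type*) (X : ι → Type*) [∀ i, AddCommGroup (X i)] [∀ i, Module A (X i)]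
    [∀ i, Module.Finite A (X i)]
    (M : Submodule A (⨁ i, X i))
    (h : IsLocalRing.maximalIdeal A • (⊤ : Submodule A M) = ⊤) :
    M = ⊥ := by
  have hM : IsLocalRing.maximalIdeal A • M = M := by
    have := congrArg (Submodule.map M.subtype) h
    rwa [Submodule.map_smul'', Submodule.map_top, Submodule.range_subtype] at this
  have key : ∀ i, M.map (DirectSum.component A ι X i) = ⊥ := by
    intro i
    apply Submodule.eq_bot_of_le_smul_of_le_jacobson_bot (IsLocalRing.maximalIdeal A)
    · have : IsNoetherian A (X i) := isNoetherian_of_isNoetherianRing_of_finite A (X i)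
      exact IsNoetherian.noetherian _
    · rw [← Submodule.map_smul'', hM]
    · exact IsLocalRing.maximalIdeal_le_jacobson ⊥
  rw [eq_bot_iff]
  intro x hx
  simp only [Submodule.mem_bot]
  refine DFinsupp.ext fun i => ?_
  have : DirectSum.component A ι X i x ∈ M.map (DirectSum.component A ι X i) :=
    Submodule.mem_map_of_mem hx
  rw [key i] at this
  change DirectSum.component A ι X i x = (0 : ⨁ i, X i) i
  simpa using this
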